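/- For every real z with 0 < |z| < π, the inequality (4/z²)sin²(z/2) + (4/(3z²))sin⁴(z/2) - 1 < 0 holds. -/

import Mathlib

open Real Set

private noncomputable def hAux (z : ℝ) : ℝ := 6*z - 8*Real.sin z + 2*Real.sin z*Real.cos z

private noncomputable def fAux (z : ℝ) : ℝ := 3*z^2 - (1 - Real.cos z)*(7 - Real.cos z)

private lemma hAux_hasDeriv (z : ℝ) :
    HasDerivAt hAux (6 - 8*Real.cos z + 2*(Real.cos z*Real.cos z - Real.sin z*Real.sin z)) z := by
  have h1 : HasDerivAt (fun z : ℝ => 6*z) 6 z := by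
    simpa using (hasDerivAt_id z).const_mul 6
  have h2 := (Real.hasDerivAt_sin z).const_mul (8:ℝ)
  have h3 := (((Real.hasDerivAt_sin z).mul (Real.hasDerivAt_cos z))).const_mul (2:ℝ)
  have := (h1.sub h2).add h3
  have heq : hAux = (fun x : ℝ => 6*x - 8*Real.sin x + 2*(Real.sin x*Real.cos x)) := by
    funext x; simp only [hAux]; ring
  rw [heq]
  refine this.congr_deriv ?_
  ring

private lemma hAux_pos {z : ℝ} (h0 : 0 < z) (hpi : z < Real.pi) : 0 < hAux z := by
  have hmono : StrictMonoOn hAux (Icc 0 Real.pi) := by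
    apply strictMonoOn_of_deriv_pos (convex_Icc 0 Real.pi)
    · exact fun x _ => (hAux_hasDeriv x).continuousAt.continuousWithinAt
    · intro x hx
      rw [interior_Icc] at hx
      rw [(hAux_hasDeriv x).deriv]
      have hs : 0 < Real.sin x := Real.sin_pos_of_pos_of_lt_pi hx.1 hx.2
      have hpyth := Real.sin_sq_add_cos_sq x
      have hs2 : 0 < Real.sin x ^ 2 := by positivity
      have hc : Real.cos x < 1 := by nlinarith [Real.neg_one_le_cos x]
      nlinarith [mul_pos (sub_pos.2 hc) (sub_pos.2 hc)]
  have h00 : hAux 0 = 0 := by simp [hAux]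
  have := hmono (by constructor <;> positivity) ⟨h0.le, hpi.le⟩ h0
  simpa [h00] using this

private lemma fAux_pos {z : ℝ} (h0 : 0 < z) (hpi : z < Real.pi) : 0 < fAux z := by
  have hderiv : ∀ x : ℝ, HasDerivAt fAux (hAux x) x := by
    intro x
    have h1 : HasDerivAt (fun z : ℝ => 3*z^2) (6*x) x := by
      have := (hasDerivAt_pow 2 x).const_mul (3:ℝ)
      refine this.congr_deriv ?_
      norm_num; ring
    have h2 : HasDerivAt (fun z : ℝ => (1 - Real.cos z)*(7 - Real.cos z))
        ((0 - (-Real.sin x))*(7 - Real.cos x) + (1 - Real.cos x)*(0 - (-Real.sin x))) x := by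
      exact ((hasDerivAt_const x (1:ℝ)).sub (Real.hasDerivAt_cos x)).mul
        ((hasDerivAt_const x (7:ℝ)).sub (Real.hasDerivAt_cos x))
    have := h1.sub h2
    refine this.congr_deriv ?_
    simp [hAux]; ring
  have hmono : StrictMonoOn fAux (Icc 0 Real.pi) := by
    apply strictMonoOn_of_deriv_pos (convex_Icc 0 Real.pi)
    · exact fun x _ => (hderiv x).continuousAt.continuousWithinAt
    · intro x hx
      rw [interior_Icc] at hx
      rw [(hderiv x).deriv]
      exact hAux_pos hx.1 hx.2
  have h00 : fAux 0 = 0 := by simp [fAux]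
  have := hmono (by constructor <;> positivity) ⟨h0.le, hpi.le⟩ h0
  simpa [h00] using this

theorem stmt_1 (z : ℝ) (h0 : 0 < |z|) (hpi : |z| < Real.pi) :
    4 / z ^ 2 * Real.sin (z/2) ^ 2 + 4 / (3 * z ^ 2) * Real.sin (z/2) ^ 4 - 1 < 0 := by
  have hkey : 0 < fAux |z| := fAux_pos h0 hpi
  have hcos : Real.cos |z| = Real.cos z := by
    rcases abs_choice z with h | h <;> simp [h]
  have hsin : Real.sin (z/2) ^ 2 = (1 - Real.cos z) / 2 := by
    have h1 : Real.cos (2 * (z/2)) = 2 * Real.cos (z/2) ^ 2 - 1 := Real.cos_two_mul _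
    have h2 := Real.sin_sq_add_cos_sq (z/2)
    have h3 : (2 : ℝ) * (z/2) = z := by ring
    rw [h3] at h1
    nlinarith
  have hz2 : |z| ^ 2 = z ^ 2 := sq_abs z
  have hzpos : (0:ℝ) < z ^ 2 := by
    rw [← hz2]; positivity
  rw [fAux, hcos, hz2] at hkey
  rw [hsin]
  have h4 : Real.sin (z/2) ^ 4 = ((1 - Real.cos z) / 2) ^ 2 := by
    rw [show (4:ℕ) = 2*2 from rfl, pow_mul, hsin]
  rw [h4]
  have heq : 4 / z ^ 2 * ((1 - Real.cos z) / 2) + 4 / (3 * z ^ 2) * ((1 - Real.cos z) / 2) ^ 2 - 1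
      = ((1 - Real.cos z) * (7 - Real.cos z) - 3 * z ^ 2) / (3 * z ^ 2) := by
    have hz : z ≠ 0 := by rintro rfl; simp at hzpos
    field_simp
    ring
  rw [heq]
  apply div_neg_of_neg_of_pos _ (by positivity)
  linarith
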